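/- Every y^β-admissible directed path in the quantum Bruhat graph Γ_n whose initial vertex is the identity permutation has weight 0 in ℤ^{n−1}; equivalently, every edge of such a path satisfies the length-increasing condition ℓ(u s_{ij}) = ℓ(u) + 1, so the path is a saturated chain in the Bruhat order. -/

import Mathlib

open Equiv

/-- Number of inversions of a permutation of `Fin n` (its Coxeter length). -/
def len (n : ℕ) (w : Equiv.Perm (Fin n)) : ℕ :=
  (Finset.univ.filter (fun p : Fin n × Fin n => p.1 < p.2 ∧ w p.2 < w p.1)).card

/-- The endpoint of the edge labeled `p = (i, j)` starting at `u`: right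
multiplication by the transposition `s_{ij}`. -/
def step (n : ℕ) (u : Equiv.Perm (Fin n)) (p : Fin n × Fin n) : Equiv.Perm (Fin n) :=
  u * Equiv.swap p.1 p.2

/-- `u → u·s_{ij}` is an edge of the quantum Bruhat graph `Γ_n`:
either `ℓ(u s_{ij}) = ℓ(u) + 1`, or `ℓ(u s_{ij}) = ℓ(u) + 1 - 2(j - i)`. -/
def isQBEdge (n : ℕ) (u : Equiv.Perm (Fin n)) (p : Fin n × Fin n) : Prop :=
  p.1 < p.2 ∧
    (len n (step n u p) = len n u + 1 ∨
     len n (step n u p) + 2 * ((p.2 : ℕ) - (p.1 : ℕ)) = len n u + 1)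

/-- The weight in `ℤ^{n-1}` of the edge labeled `p = (i,j)` starting at `u`:
`0` for a Bruhat cover, and `e_i + e_{i+1} + ⋯ + e_{j-1}` for a quantum edge.
(Here coordinates of `Fin (n-1)` are `0`-based: index `k` is the paper's `q_{k+1}`.) -/
def edgeWeight (n : ℕ) (u : Equiv.Perm (Fin n)) (p : Fin n × Fin n) : Fin (n - 1) → ℤ :=
  if len n (step n u p) = len n u + 1 then 0
  else fun k => if (p.1 : ℕ) ≤ (k : ℕ) ∧ (k : ℕ) < (p.2 : ℕ) then 1 else 0

/-- `isPath n u L v` : the list of labels `L` encodes a directed path from `u` to `v`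
in the quantum Bruhat graph `Γ_n`. -/
def isPath (n : ℕ) : Equiv.Perm (Fin n) → List (Fin n × Fin n) → Equiv.Perm (Fin n) → Prop
  | u, [], v => u = v
  | u, p :: ps, v => isQBEdge n u p ∧ isPath n (step n u p) ps v

/-- The weight of a directed path: the sum in `ℤ^{n-1}` of the weights of its edges. -/
def pathWeight (n : ℕ) : Equiv.Perm (Fin n) → List (Fin n × Fin n) → (Fin (n - 1) → ℤ)
  | _, [] => 0
  | u, p :: ps => edgeWeight n u p + pathWeight n (step n u p) ps

/-- Every edge of the path is length-increasing (a Bruhat cover). -/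
def allUp (n : ℕ) : Equiv.Perm (Fin n) → List (Fin n × Fin n) → Prop
  | _, [] => True
  | u, p :: ps => len n (step n u p) = len n u + 1 ∧ allUp n (step n u p) ps

/-- A path with labels `(a_1,b_1), …, (a_i,b_i)` is `y_k^i`-admissible if
`a_1 ≤ ⋯ ≤ a_i ≤ k < b_1, …, b_i` and the `b_t` are pairwise distinct.
(`k : Fin (n-1)` is `0`-based: it stands for the paper's `k+1`.) -/
def yAdm (n : ℕ) (k : Fin (n - 1)) (L : List (Fin n × Fin n)) : Prop :=
  List.Chain' (· ≤ ·) (L.map Prod.fst) ∧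
  (∀ p ∈ L, (p.1 : ℕ) ≤ (k : ℕ) ∧ (k : ℕ) < (p.2 : ℕ)) ∧
  (L.map Prod.snd).Nodup

/-- A path is `y^β`-admissible if it is a concatenation `P_1 ∘ ⋯ ∘ P_{n-1}` where
`P_k` is `y_k^{β_k}`-admissible. -/
def yBetaAdm (n : ℕ) (β : Fin (n - 1) → ℕ) (L : List (Fin n × Fin n)) : Prop :=
  ∃ Ls : Fin (n - 1) → List (Fin n × Fin n),
    L = (List.ofFn Ls).flatten ∧
    ∀ k : Fin (n - 1), (Ls k).length = β k ∧ yAdm n k (Ls k)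

/-- A path with labels `(a_1,b_1), …, (a_l,b_l)` is admissible if there are
`k_1 ≤ ⋯ ≤ k_l` with `a_t ≤ k_t < b_t` and the pairs `(k_t, b_t)` pairwise distinct. -/
def Adm (n : ℕ) (L : List (Fin n × Fin n)) : Prop :=
  ∃ ks : List ℕ, ks.length = L.length ∧ List.Chain' (· ≤ ·) ks ∧
    (∀ pr ∈ ks.zip L, (pr.2.1 : ℕ) ≤ pr.1 ∧ pr.1 < (pr.2.2 : ℕ)) ∧
    (ks.zip (L.map Prod.snd)).Nodup

/-- The longest permutation `w_o : i ↦ n + 1 - i` (0-based: `i ↦ n - 1 - i`). -/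
def wo (n : ℕ) : Equiv.Perm (Fin n) :=
  Function.Involutive.toPerm Fin.rev (fun i => Fin.rev_rev i)


namespace QBGproof

open Equiv Finset

variable {n : ℕ}

/-- quantum-edge shape: `u b < u a` and every value at a position strictly between
`a` and `b` lies strictly between `u b` and `u a`. -/
def QShape (n : ℕ) (u : Equiv.Perm (Fin n)) (a b : Fin n) : Prop :=
  u b < u a ∧ ∀ c : Fin n, a < c → c < b → u b < u c ∧ u c < u a

/-- cover shape: `u a < u b` and no value at a position strictly between `a` and `b`
lies strictly between `u a` and `u b`. -/
def Cov (n : ℕ) (u : Equiv.Perm (Fin n)) (a b : Fin n) : Prop :=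
  u a < u b ∧ ∀ c : Fin n, a < c → c < b → ¬(u a < u c ∧ u c < u b)

/-- The inductive invariant: no admissible continuation can start with a quantum edge. -/
def GoodState (n : ℕ) (u : Equiv.Perm (Fin n)) (k amin : ℕ) (B : Finset (Fin n)) : Prop :=
  ∀ (k' : ℕ) (a b : Fin n), k ≤ k' → (a : ℕ) ≤ k' → k' < (b : ℕ) →
    (k' = k → amin ≤ (a : ℕ) ∧ b ∉ B) → ¬ QShape n u a b

lemma card_filter_add_card_filter {α : Type*} [DecidableEq α] (s : Finset α) (p q : α → Prop)
    [DecidablePred p] [DecidablePred q] (h : ∀ x ∈ s, p x ∨ q x) :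
    (s.filter p).card + (s.filter q).card = s.card + (s.filter fun x => p x ∧ q x).card := by
  have h1 : (s.filter p) ∪ (s.filter q) = s := by
    rw [← Finset.filter_or]; exact Finset.filter_true_of_mem h
  have h2 : (s.filter p) ∩ (s.filter q) = s.filter (fun x => p x ∧ q x) :=
    (Finset.filter_and _ _ _).symm
  rw [← Finset.card_union_add_card_inter, h1, h2]

/-- Key length formula: if `u a < u b` with `a < b`, then
`ℓ(u·s_{ab}) = ℓ(u) + 1 + 2·#{c ∈ (a,b) : u a < u c < u b}`. -/
lemma len_mul_swap (u : Equiv.Perm (Fin n)) (a b : Fin n) (hab : a < b) (hu : u a < u b) :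
    len n (u * Equiv.swap a b) = len n u + 1 +
      2 * (Finset.univ.filter fun c : Fin n => a < c ∧ c < b ∧ u a < u c ∧ u c < u b).card := by
  set σ := Equiv.swap a b with hσdef
  have hσa : σ a = b := Equiv.swap_apply_left a b
  have hσb : σ b = a := Equiv.swap_apply_right a b
  have hσo : ∀ c : Fin n, c ≠ a → c ≠ b → σ c = c := fun c h1 h2 =>
    Equiv.swap_apply_of_ne_of_ne h1 h2
  have hσσ : ∀ c : Fin n, σ (σ c) = c := fun c => Equiv.swap_apply_self a b c
  -- characterization of order-reversed pairs
  have hrev : ∀ p q : Fin n, (p < q ∧ σ q < σ p) ↔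
      ((p = a ∧ a < q ∧ q ≤ b) ∨ (a < p ∧ p < b ∧ q = b)) := by
    intro p q
    constructor
    · rintro ⟨h1, h2⟩
      by_cases hpa : p = a
      · subst hpa
        rw [hσa] at h2
        refine Or.inl ⟨rfl, h1, ?_⟩
        by_cases hqb : q = b
        · exact le_of_eq hqb
        · rw [hσo q (ne_of_gt h1) hqb] at h2
          exact h2.le
      · by_cases hpb : p = b
        · subst hpb
          rw [hσb] at h2
          rw [hσo q (ne_of_gt (lt_trans hab h1)) (ne_of_gt h1)] at h2
          exact absurd (lt_trans (lt_trans h1 h2) hab) (lt_irrefl _)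
        · rw [hσo p hpa hpb] at h2
          by_cases hqa : q = a
          · subst hqa
            rw [hσa] at h2
            exact absurd (lt_trans h1 (lt_trans hab h2)) (lt_irrefl _)
          · by_cases hqb : q = b
            · subst hqb
              rw [hσb] at h2
              exact Or.inr ⟨h2, h1, rfl⟩
            · rw [hσo q hqa hqb] at h2
              exact absurd (lt_trans h1 h2) (lt_irrefl _)
    · rintro (⟨rfl, h1, h2⟩ | ⟨h1, h2, rfl⟩)
      · refine ⟨h1, ?_⟩
        rw [hσa]
        rcases eq_or_lt_of_le h2 with he | hlt
        · rw [he, hσb]; exact hab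
        · rw [hσo q (ne_of_gt h1) (ne_of_lt hlt)]; exact hlt
      · refine ⟨h2, ?_⟩
        rw [hσb, hσo p (ne_of_gt h1) (ne_of_lt h2)]
        exact h1
  classical
  -- reindexing: length of u * σ
  have lenA : len n (u * σ) =
      (Finset.univ.filter fun p : Fin n × Fin n => σ p.1 < σ p.2 ∧ u p.2 < u p.1).card := by
    unfold len
    apply Finset.card_bij' (i := fun p _ => (σ p.1, σ p.2)) (j := fun p _ => (σ p.1, σ p.2))
    · intro p hp
      simp only [Finset.mem_filter, Finset.mem_univ, true_and] at hp ⊢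
      simp only [Equiv.Perm.mul_apply] at hp
      exact ⟨by rw [hσσ, hσσ]; exact hp.1, hp.2⟩
    · intro p hp
      simp only [Finset.mem_filter, Finset.mem_univ, true_and] at hp ⊢
      simp only [Equiv.Perm.mul_apply, hσσ]
      exact hp
    · intro p _; simp [hσσ]
    · intro p _; simp [hσσ]
  set Asc := Finset.univ.filter
    (fun p : Fin n × Fin n => (p.1 < p.2 ∧ σ p.2 < σ p.1) ∧ u p.1 < u p.2) with hAsc
  set Des := Finset.univ.filter
    (fun p : Fin n × Fin n => (p.1 < p.2 ∧ σ p.2 < σ p.1) ∧ u p.2 < u p.1) with hDes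
  set C := Finset.univ.filter
    (fun p : Fin n × Fin n => (p.1 < p.2 ∧ σ p.1 < σ p.2) ∧ u p.2 < u p.1) with hC
  -- split the reindexed set
  have split1 : len n (u * σ) = C.card + Asc.card := by
    rw [lenA]
    rw [← Finset.card_filter_add_card_filter_not
      (p := fun p : Fin n × Fin n => p.1 < p.2)]
    congr 1
    · rw [Finset.filter_filter, hC]
      exact congrArg Finset.card (Finset.filter_congr (fun p _ => by tauto))
    · rw [Finset.filter_filter]
      refine Finset.card_bij' (fun p _ => (p.2, p.1)) (fun p _ => (p.2, p.1)) ?_ ?_ ?_ ?_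
      · intro p hp
        simp only [Finset.mem_filter, Finset.mem_univ, true_and, hAsc] at hp ⊢
        obtain ⟨⟨hσlt, hult⟩, hnlt⟩ := hp
        have hne : p.2 ≠ p.1 := fun he => absurd (he ▸ hult) (lt_irrefl _)
        exact ⟨⟨lt_of_le_of_ne (not_lt.mp hnlt) hne, hσlt⟩, hult⟩
      · intro p hp
        simp only [Finset.mem_filter, Finset.mem_univ, true_and, hAsc] at hp ⊢
        obtain ⟨⟨hlt, hσlt⟩, hult⟩ := hp
        exact ⟨⟨hσlt, hult⟩, not_lt.mpr hlt.le⟩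
      · intro p _; rfl
      · intro p _; rfl
  have split2 : len n u = C.card + Des.card := by
    unfold len
    rw [← Finset.card_filter_add_card_filter_not
      (p := fun p : Fin n × Fin n => σ p.1 < σ p.2)]
    congr 1
    · rw [Finset.filter_filter, hC]
      exact congrArg Finset.card (Finset.filter_congr (fun p _ => by tauto))
    · rw [Finset.filter_filter, hDes]
      refine congrArg Finset.card (Finset.filter_congr (fun p _ => ?_))
      constructor
      · rintro ⟨⟨hlt, hult⟩, hnσ⟩
        have hne : σ p.2 ≠ σ p.1 := fun he =>
          absurd (σ.injective he ▸ hlt) (lt_irrefl _)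
        exact ⟨⟨hlt, lt_of_le_of_ne (not_lt.mp hnσ) hne⟩, hult⟩
      · rintro ⟨⟨hlt, hσlt⟩, hult⟩
        exact ⟨⟨hlt, hult⟩, not_lt.mpr hσlt.le⟩
  -- counting sets over single positions
  set S := Finset.univ.filter (fun c : Fin n => a < c ∧ c < b) with hS
  set M := Finset.univ.filter
    (fun c : Fin n => a < c ∧ c < b ∧ u a < u c ∧ u c < u b) with hM
  set X1 := Finset.univ.filter (fun c : Fin n => (a < c ∧ c < b) ∧ u a < u c) with hX1
  set X2 := Finset.univ.filter (fun c : Fin n => (a < c ∧ c < b) ∧ u c < u b) with hX2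
  set Y1 := Finset.univ.filter (fun c : Fin n => (a < c ∧ c < b) ∧ u c < u a) with hY1
  set Y2 := Finset.univ.filter (fun c : Fin n => (a < c ∧ c < b) ∧ u b < u c) with hY2
  have e3 : S.filter (fun c => u a < u c ∧ u c < u b) = M := by
    rw [hS, hM, Finset.filter_filter]
    exact Finset.filter_congr (fun c _ => by tauto)
  have hsplitrev : ∀ (P : Fin n → Fin n → Prop) [DecidableRel P],
      Finset.univ.filter (fun p : Fin n × Fin n => (p.1 < p.2 ∧ σ p.2 < σ p.1) ∧ P p.1 p.2)
      = (Finset.univ.filter fun p : Fin n × Fin n => (p.1 = a ∧ a < p.2 ∧ p.2 ≤ b) ∧ P p.1 p.2)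
        ∪ (Finset.univ.filter fun p : Fin n × Fin n =>
            (a < p.1 ∧ p.1 < b ∧ p.2 = b) ∧ P p.1 p.2) := by
    intro P _
    rw [← Finset.filter_or]
    exact Finset.filter_congr (fun p _ => by rw [hrev p.1 p.2]; tauto)
  have hdisjrev : ∀ (P : Fin n → Fin n → Prop) [DecidableRel P],
      Disjoint (Finset.univ.filter fun p : Fin n × Fin n =>
          (p.1 = a ∧ a < p.2 ∧ p.2 ≤ b) ∧ P p.1 p.2)
        (Finset.univ.filter fun p : Fin n × Fin n =>
          (a < p.1 ∧ p.1 < b ∧ p.2 = b) ∧ P p.1 p.2) := by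
    intro P _
    rw [Finset.disjoint_left]
    intro p h1 h2
    simp only [Finset.mem_filter, Finset.mem_univ, true_and] at h1 h2
    exact absurd (h1.1.1 ▸ h2.1.1) (lt_irrefl a)
  have hbij1 : ∀ (P : Fin n → Fin n → Prop) [DecidableRel P],
      (Finset.univ.filter fun p : Fin n × Fin n =>
        (p.1 = a ∧ a < p.2 ∧ p.2 ≤ b) ∧ P p.1 p.2).card
      = (Finset.univ.filter fun c : Fin n => (a < c ∧ c ≤ b) ∧ P a c).card := by
    intro P _
    refine Finset.card_bij' (fun p _ => p.2) (fun c _ => (a, c)) ?_ ?_ ?_ ?_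
    · intro p hp
      simp only [Finset.mem_filter, Finset.mem_univ, true_and] at hp ⊢
      obtain ⟨⟨h1, h2, h3⟩, h4⟩ := hp
      exact ⟨⟨h2, h3⟩, h1 ▸ h4⟩
    · intro c hc
      simp only [Finset.mem_filter, Finset.mem_univ, true_and] at hc
      exact Finset.mem_filter.mpr ⟨Finset.mem_univ _, ⟨rfl, hc.1.1, hc.1.2⟩, hc.2⟩
    · intro p hp
      simp only [Finset.mem_filter, Finset.mem_univ, true_and] at hp
      obtain ⟨⟨h1, _, _⟩, _⟩ := hp
      exact Prod.ext h1.symm rfl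
    · intro c _; rfl
  have hbij2 : ∀ (P : Fin n → Fin n → Prop) [DecidableRel P],
      (Finset.univ.filter fun p : Fin n × Fin n =>
        (a < p.1 ∧ p.1 < b ∧ p.2 = b) ∧ P p.1 p.2).card
      = (Finset.univ.filter fun c : Fin n => (a < c ∧ c < b) ∧ P c b).card := by
    intro P _
    refine Finset.card_bij' (fun p _ => p.1) (fun c _ => (c, b)) ?_ ?_ ?_ ?_
    · intro p hp
      simp only [Finset.mem_filter, Finset.mem_univ, true_and] at hp ⊢
      obtain ⟨⟨h1, h2, h3⟩, h4⟩ := hp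
      exact ⟨⟨h1, h2⟩, h3 ▸ h4⟩
    · intro c hc
      simp only [Finset.mem_filter, Finset.mem_univ, true_and] at hc
      exact Finset.mem_filter.mpr ⟨Finset.mem_univ _, ⟨hc.1.1, hc.1.2, rfl⟩, hc.2⟩
    · intro p hp
      simp only [Finset.mem_filter, Finset.mem_univ, true_and] at hp
      obtain ⟨⟨_, _, h3⟩, _⟩ := hp
      exact Prod.ext rfl h3.symm
    · intro c _; rfl
  have cardAsc : Asc.card = (X1.card + 1) + X2.card := by
    rw [hAsc, hsplitrev (fun x y => u x < u y),
      Finset.card_union_of_disjoint (hdisjrev (fun x y => u x < u y)),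
      hbij1 (fun x y => u x < u y), hbij2 (fun x y => u x < u y)]
    have hins : (Finset.univ.filter fun c : Fin n => (a < c ∧ c ≤ b) ∧ u a < u c)
        = insert b X1 := by
      ext c
      simp only [Finset.mem_filter, Finset.mem_univ, true_and, Finset.mem_insert, hX1]
      constructor
      · rintro ⟨⟨h1, h2⟩, h3⟩
        rcases eq_or_lt_of_le h2 with he | hlt
        · exact Or.inl he
        · exact Or.inr ⟨⟨h1, hlt⟩, h3⟩
      · rintro (rfl | ⟨⟨h1, h2⟩, h3⟩)
        · exact ⟨⟨hab, le_refl _⟩, hu⟩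
        · exact ⟨⟨h1, h2.le⟩, h3⟩
    rw [hins, Finset.card_insert_of_notMem (by
      rw [hX1]
      simp only [Finset.mem_filter, Finset.mem_univ, true_and, not_and]
      intro h
      exact absurd h.2 (lt_irrefl b)), ← hX2]
  have cardDes : Des.card = Y1.card + Y2.card := by
    rw [hDes, hsplitrev (fun x y => u y < u x),
      Finset.card_union_of_disjoint (hdisjrev (fun x y => u y < u x)),
      hbij1 (fun x y => u y < u x), hbij2 (fun x y => u y < u x)]
    have g1 : (Finset.univ.filter fun c : Fin n => (a < c ∧ c ≤ b) ∧ u c < u a) = Y1 := by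
      rw [hY1]
      refine Finset.filter_congr (fun c _ => ?_)
      constructor
      · rintro ⟨⟨h1, h2⟩, h3⟩
        rcases eq_or_lt_of_le h2 with he | hlt
        · subst he; exact absurd (lt_trans hu h3) (lt_irrefl _)
        · exact ⟨⟨h1, hlt⟩, h3⟩
      · rintro ⟨⟨h1, h2⟩, h3⟩
        exact ⟨⟨h1, h2.le⟩, h3⟩
    rw [g1, ← hY2]
  have hXid : X1.card + X2.card = S.card + M.card := by
    have e1 : S.filter (fun c => u a < u c) = X1 := by
      rw [hS, hX1, Finset.filter_filter]
    have e2 : S.filter (fun c => u c < u b) = X2 := by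
      rw [hS, hX2, Finset.filter_filter]
    rw [← e1, ← e2, ← e3]
    exact card_filter_add_card_filter S _ _
      (fun x _ => (lt_or_ge (u a) (u x)).imp id (fun h => lt_of_le_of_lt h hu))
  have hYid : Y1.card + Y2.card + M.card = S.card := by
    have htot2 : ∀ x ∈ S, (u x < u a ∨ u b < u x) ∨ (u a < u x ∧ u x < u b) := by
      intro x hx
      rw [hS, Finset.mem_filter] at hx
      have hxa : u x ≠ u a := fun he => lt_irrefl a (u.injective he ▸ hx.2.1)
      have hxb : u x ≠ u b := fun he => lt_irrefl b (u.injective he ▸ hx.2.2)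
      rcases lt_trichotomy (u x) (u a) with h | h | h
      · exact Or.inl (Or.inl h)
      · exact absurd h hxa
      · rcases lt_trichotomy (u x) (u b) with h' | h' | h'
        · exact Or.inr ⟨h, h'⟩
        · exact absurd h' hxb
        · exact Or.inl (Or.inr h')
    have hkey := card_filter_add_card_filter S
      (fun c => u c < u a ∨ u b < u c) (fun c => u a < u c ∧ u c < u b) htot2
    have f1 : S.filter (fun c => u c < u a ∨ u b < u c) = Y1 ∪ Y2 := by
      rw [hS, Finset.filter_filter, hY1, hY2, ← Finset.filter_or]
      exact Finset.filter_congr (fun c _ => by tauto)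
    have f2 : S.filter (fun c => (u c < u a ∨ u b < u c) ∧ (u a < u c ∧ u c < u b))
        = ∅ := by
      refine Finset.filter_false_of_mem ?_
      rintro c _ ⟨h | h, h2, h3⟩
      · exact absurd (lt_trans h2 h) (lt_irrefl _)
      · exact absurd (lt_trans h h3) (lt_irrefl _)
    have hdisj : Disjoint Y1 Y2 := by
      rw [Finset.disjoint_left]
      intro c h1 h2
      rw [hY1, Finset.mem_filter] at h1
      rw [hY2, Finset.mem_filter] at h2
      exact absurd (lt_trans (lt_trans h2.2.2 h1.2.2) hu) (lt_irrefl _)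
    rw [f1, e3, f2, Finset.card_union_of_disjoint hdisj] at hkey
    simpa using hkey
  have hMeq : (Finset.univ.filter fun c : Fin n =>
      a < c ∧ c < b ∧ u a < u c ∧ u c < u b).card = M.card := by rw [hM]
  rw [hMeq]
  omega

lemma swap_unswap (u : Equiv.Perm (Fin n)) (a b : Fin n) :
    (u * Equiv.swap a b) * Equiv.swap a b = u := by
  rw [mul_assoc, Equiv.swap_mul_self, mul_one]

lemma mulswap_left (u : Equiv.Perm (Fin n)) (a b : Fin n) :
    (u * Equiv.swap a b) a = u b := by
  rw [Equiv.Perm.mul_apply, Equiv.swap_apply_left]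

lemma mulswap_right (u : Equiv.Perm (Fin n)) (a b : Fin n) :
    (u * Equiv.swap a b) b = u a := by
  rw [Equiv.Perm.mul_apply, Equiv.swap_apply_right]

lemma mulswap_other (u : Equiv.Perm (Fin n)) {a b c : Fin n} (h1 : c ≠ a) (h2 : c ≠ b) :
    (u * Equiv.swap a b) c = u c := by
  rw [Equiv.Perm.mul_apply, Equiv.swap_apply_of_ne_of_ne h1 h2]

/-- the length formula for a descent, deduced by applying `len_mul_swap` to `u·s_{ab}`. -/
lemma len_mul_swap' (u : Equiv.Perm (Fin n)) (a b : Fin n) (hab : a < b) (hu : u b < u a) :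
    len n u = len n (u * Equiv.swap a b) + 1 +
      2 * (Finset.univ.filter fun c : Fin n =>
        a < c ∧ c < b ∧ (u * Equiv.swap a b) a < (u * Equiv.swap a b) c ∧
          (u * Equiv.swap a b) c < (u * Equiv.swap a b) b).card := by
  have := len_mul_swap (u * Equiv.swap a b) a b hab
    (by rw [mulswap_left, mulswap_right]; exact hu)
  rwa [swap_unswap] at this

lemma cov_of_up (u : Equiv.Perm (Fin n)) (a b : Fin n) (hab : a < b)
    (h : len n (u * Equiv.swap a b) = len n u + 1) : Cov n u a b := by
  rcases lt_trichotomy (u a) (u b) with hlt | he | hgt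
  · have hl := len_mul_swap u a b hab hlt
    have hc : (Finset.univ.filter fun c : Fin n =>
        a < c ∧ c < b ∧ u a < u c ∧ u c < u b).card = 0 := by omega
    refine ⟨hlt, fun c h1 h2 hm => ?_⟩
    have hmem : c ∈ (Finset.univ.filter fun c : Fin n =>
        a < c ∧ c < b ∧ u a < u c ∧ u c < u b) :=
      Finset.mem_filter.mpr ⟨Finset.mem_univ _, h1, h2, hm.1, hm.2⟩
    rw [Finset.card_eq_zero.mp hc] at hmem
    exact Finset.notMem_empty c hmem
  · exact absurd (u.injective he) hab.ne
  · have := len_mul_swap' u a b hab hgt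
    omega

lemma qshape_of_quantum (u : Equiv.Perm (Fin n)) (a b : Fin n) (hab : a < b)
    (h : len n (u * Equiv.swap a b) + 2 * ((b : ℕ) - (a : ℕ)) = len n u + 1) :
    QShape n u a b := by
  have hba : (a : ℕ) < (b : ℕ) := hab
  rcases lt_trichotomy (u a) (u b) with hlt | he | hgt
  · have := len_mul_swap u a b hab hlt
    omega
  · exact absurd (u.injective he) hab.ne
  · have hl := len_mul_swap' u a b hab hgt
    set F := Finset.univ.filter fun c : Fin n =>
        a < c ∧ c < b ∧ (u * Equiv.swap a b) a < (u * Equiv.swap a b) c ∧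
          (u * Equiv.swap a b) c < (u * Equiv.swap a b) b with hF
    have hsub : F ⊆ Finset.Ioo a b := by
      intro c hc
      rw [hF, Finset.mem_filter] at hc
      exact Finset.mem_Ioo.mpr ⟨hc.2.1, hc.2.2.1⟩
    have hcard : (Finset.Ioo a b).card ≤ F.card := by
      rw [Fin.card_Ioo]
      omega
    have heq : F = Finset.Ioo a b := Finset.eq_of_subset_of_card_le hsub hcard
    refine ⟨hgt, fun c h1 h2 => ?_⟩
    have hmem : c ∈ F := heq ▸ Finset.mem_Ioo.mpr ⟨h1, h2⟩
    rw [hF, Finset.mem_filter] at hmem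
    obtain ⟨-, -, -, hm1, hm2⟩ := hmem
    rw [mulswap_other u (ne_of_gt h1) (ne_of_lt h2)] at hm1 hm2
    rw [mulswap_left] at hm1
    rw [mulswap_right] at hm2
    exact ⟨hm1, hm2⟩

lemma good_init (k amin : ℕ) (B : Finset (Fin n)) : GoodState n 1 k amin B := by
  intro k' a b _ h2 h3 _ hQ
  have : (a : ℕ) < (b : ℕ) := lt_of_le_of_lt h2 h3
  have hab : a < b := this
  exact absurd hQ.1 (by simpa using not_lt.2 hab.le)

lemma good_weaken {u : Equiv.Perm (Fin n)} {k amin k2 : ℕ} {B : Finset (Fin n)}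
    (hg : GoodState n u k amin B) (h : k < k2) : GoodState n u k2 0 ∅ := by
  intro k' a b h1 h2 h3 _
  exact hg k' a b (le_trans h.le h1) h2 h3 (fun he => absurd (he ▸ h1) (by omega))

/-- The crux: a cover move allowed from a good state leads to a good state. -/
lemma step_good {u : Equiv.Perm (Fin n)} {k amin : ℕ} {B : Finset (Fin n)} {a b : Fin n}
    (hak : (a : ℕ) ≤ k) (hkb : k < (b : ℕ)) (hamin : amin ≤ (a : ℕ)) (hbB : b ∉ B)
    (hcov : Cov n u a b) (hgood : GoodState n u k amin B) :
    GoodState n (u * Equiv.swap a b) k (a : ℕ) (insert b B) := by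
  intro k' a' b' hkk' ha'k' hk'b' hside hQ
  have hab : a < b := Fin.lt_def.mpr (lt_of_le_of_lt hak hkb)
  have ha'b' : a' < b' := Fin.lt_def.mpr (lt_of_le_of_lt ha'k' hk'b')
  have ea : (u * Equiv.swap a b) a = u b := mulswap_left u a b
  have eb : (u * Equiv.swap a b) b = u a := mulswap_right u a b
  have eo : ∀ {c : Fin n}, c ≠ a → c ≠ b → (u * Equiv.swap a b) c = u c :=
    fun h1 h2 => mulswap_other u h1 h2
  obtain ⟨hQ1, hQ2⟩ := hQ
  have useOld : ∀ (k'' : ℕ) (x y : Fin n), k ≤ k'' → (x : ℕ) ≤ k'' → k'' < (y : ℕ) →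
      (k'' = k → (a : ℕ) ≤ (x : ℕ) ∧ y ∉ B) → ¬ QShape n u x y :=
    fun k'' x y h1 h2 h3 h4 => hgood k'' x y h1 h2 h3
      (fun he => ⟨le_trans hamin (h4 he).1, (h4 he).2⟩)
  have hside' : k' = k → (a : ℕ) ≤ (a' : ℕ) ∧ b' ∉ B ∧ b' ≠ b := by
    intro he
    obtain ⟨h1, h2⟩ := hside he
    rw [Finset.mem_insert] at h2
    push_neg at h2
    exact ⟨h1, h2.2, h2.1⟩
  by_cases hbb' : b = b'
  · subst hbb'
    -- the `b' = b` family; first, `k' = k` is impossible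
    rcases Nat.eq_or_lt_of_le hkk' with he | hkk
    · exact absurd (Finset.mem_insert_self b B) (hside he.symm).2
    rcases lt_trichotomy a a' with hlt | heq | hgt
    · -- a < a' < b' = b
      refine useOld k' a' b hkk' ha'k' hk'b' (fun he => absurd he (by omega)) ?_
      have ea' : (u * Equiv.swap a b) a' = u a' := eo hlt.ne' ha'b'.ne
      rw [ea', eb] at hQ1
      -- hQ1 : u a < u a'
      have h7 : ¬ u a' < u b := fun hx => hcov.2 a' hlt ha'b' ⟨hQ1, hx⟩
      refine ⟨lt_of_le_of_ne (not_lt.mp h7)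
        (fun he => ha'b'.ne' (u.injective he)), fun c hc1 hc2 => ?_⟩
      have hc' := hQ2 c hc1 hc2
      rw [eb, ea', eo (lt_trans hlt hc1).ne' hc2.ne] at hc'
      -- hc' : u a < u c ∧ u c < u a'
      have h8 : ¬ u c < u b := fun hx => hcov.2 c (lt_trans hlt hc1) hc2 ⟨hc'.1, hx⟩
      exact ⟨lt_of_le_of_ne (not_lt.mp h8) (fun he => hc2.ne' (u.injective he)),
        hc'.2⟩
    · -- a = a', b' = b : an interior position gives a contradiction with the cover
      have hk'n : k' < n := lt_trans hk'b' b.isLt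
      have hac1 : a < (⟨k', hk'n⟩ : Fin n) := Fin.lt_def.mpr (lt_of_le_of_lt hak hkk)
      have hc1b : (⟨k', hk'n⟩ : Fin n) < b := Fin.lt_def.mpr hk'b'
      have hc' := hQ2 ⟨k', hk'n⟩ (heq ▸ hac1) hc1b
      rw [eb, eo (ne_of_gt hac1) (ne_of_lt hc1b), ← heq, ea] at hc'
      exact hcov.2 ⟨k', hk'n⟩ hac1 hc1b ⟨hc'.1, hc'.2⟩
    · -- a' < a < b' = b : the "argmax" case
      have hbig : ∀ c : Fin n, a < c → c < b → u b < u c := by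
        intro c h1 h2
        have hc' := hQ2 c (lt_trans hgt h1) h2
        rw [eb, eo (ne_of_gt h1) (ne_of_lt h2)] at hc'
        have h4 : ¬ u c < u b := fun hx => hcov.2 c h1 h2 ⟨hc'.1, hx⟩
        exact lt_of_le_of_ne (not_lt.mp h4) (fun he => h2.ne' (u.injective he))
      have hk'n : k' < n := lt_trans hk'b' b.isLt
      have hc1 : (⟨k', hk'n⟩ : Fin n) ∈ Finset.Ioo a b :=
        Finset.mem_Ioo.mpr ⟨Fin.lt_def.mpr (lt_of_le_of_lt hak hkk),
          Fin.lt_def.mpr hk'b'⟩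
      obtain ⟨c0, hc0S, hc0max⟩ := Finset.exists_max_image (Finset.Ioo a b) u ⟨_, hc1⟩
      obtain ⟨hc0a, hc0b⟩ := Finset.mem_Ioo.mp hc0S
      refine useOld (max k (c0 : ℕ)) c0 b (le_max_left _ _) (le_max_right _ _)
        (max_lt hkb (Fin.lt_def.mp hc0b))
        (fun _ => ⟨le_of_lt (Fin.lt_def.mp hc0a), hbB⟩) ?_
      refine ⟨hbig c0 hc0a hc0b, fun c h1 h2 => ?_⟩
      refine ⟨hbig c (lt_trans hc0a h1) h2, ?_⟩
      exact lt_of_le_of_ne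
        (hc0max c (Finset.mem_Ioo.mpr ⟨lt_trans hc0a h1, h2⟩))
        (fun he => h1.ne' (u.injective he))
  · -- b ≠ b'
    by_cases hba' : b = a'
    · -- a < b = a' < b'
      have hab' : a < a' := hba' ▸ hab
      refine useOld k' a' b' hkk' ha'k' hk'b'
        (fun he => ⟨le_of_lt (Fin.lt_def.mp hab'), (hside' he).2.1⟩) ?_
      have ea' : (u * Equiv.swap a b) a' = u a := by rw [← hba', eb]
      have eb' : (u * Equiv.swap a b) b' = u b' :=
        eo (lt_trans hab' ha'b').ne' (Ne.symm hbb')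
      rw [ea', eb'] at hQ1
      have ha'v : u b' < u a' := by
        rw [← hba']
        exact lt_trans hQ1 hcov.1
      refine ⟨ha'v, fun c hc1 hc2 => ?_⟩
      have hc' := hQ2 c hc1 hc2
      rw [ea', eb', eo (lt_trans hab' hc1).ne' (hba' ▸ hc1).ne'] at hc'
      exact ⟨hc'.1, by rw [← hba']; exact lt_trans hc'.2 hcov.1⟩
    · by_cases hbi : a' < b ∧ b < b'
      · -- b interior to (a', b')
        have eb' : (u * Equiv.swap a b) b' = u b' :=
          eo (Fin.lt_def.mpr (lt_of_le_of_lt hak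
            (lt_of_le_of_lt hkk' hk'b'))).ne' (Ne.symm hbb')
        rcases lt_trichotomy a a' with hlt | heq | hgt
        · -- a < a', b interior
          refine useOld k' a' b' hkk' ha'k' hk'b'
            (fun he => ⟨le_of_lt (Fin.lt_def.mp hlt), (hside' he).2.1⟩) ?_
          have ea' : (u * Equiv.swap a b) a' = u a' := eo hlt.ne' hbi.1.ne
          rw [ea', eb'] at hQ1
          have hQb := hQ2 b hbi.1 hbi.2
          rw [ea', eb', eb] at hQb
          -- hQb : u b' < u a ∧ u a < u a'
          have hba' : ¬ u a' < u b := fun hx => hcov.2 a' hlt hbi.1 ⟨hQb.2, hx⟩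
          have hub : u b < u a' := lt_of_le_of_ne (not_lt.mp hba')
            (fun he => hbi.1.ne' (u.injective he))
          refine ⟨hQ1, fun c hc1 hc2 => ?_⟩
          by_cases hcb : c = b
          · subst hcb
            exact ⟨lt_trans hQb.1 hcov.1, hub⟩
          · have hc' := hQ2 c hc1 hc2
            rw [ea', eb', eo (lt_trans hlt hc1).ne' hcb] at hc'
            exact hc'
        · -- a = a', b interior : use the pair (b, b')
          refine useOld (b : ℕ) b b' hkb.le le_rfl (Fin.lt_def.mp hbi.2)
            (fun he => absurd he (by omega)) ?_
          have hQb := hQ2 b hbi.1 hbi.2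
          rw [eb, eb'] at hQb
          -- hQb : u b' < u a ∧ u a < (u*σ) a'
          refine ⟨lt_trans hQb.1 hcov.1, fun c hc1 hc2 => ?_⟩
          have hc' := hQ2 c (lt_trans hbi.1 hc1) hc2
          have ea'' : (u * Equiv.swap a b) a' = u b := by rw [← heq, ea]
          rw [eb', eo (lt_trans hab hc1).ne' hc1.ne', ea''] at hc'
          exact hc' 
        · -- a' < a, b interior
          have hknek : k' ≠ k := fun he =>
            absurd (hside' he).1 (not_le.mpr (Fin.lt_def.mp hgt))
          refine useOld k' a' b' hkk' ha'k' hk'b'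
            (fun he => absurd he hknek) ?_
          have ea' : (u * Equiv.swap a b) a' = u a' :=
            eo hgt.ne (lt_trans hgt hab).ne
          rw [ea', eb'] at hQ1
          have hab'2 : a < b' := Fin.lt_def.mpr (lt_of_le_of_lt hak
            (lt_of_le_of_lt hkk' hk'b'))
          have hQa := hQ2 a hgt hab'2
          rw [ea', eb', ea] at hQa
          -- hQa : u b' < u b ∧ u b < u a'
          have hQb := hQ2 b hbi.1 hbi.2
          rw [ea', eb', eb] at hQb
          -- hQb : u b' < u a ∧ u a < u a'
          refine ⟨hQ1, fun c hc1 hc2 => ?_⟩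
          by_cases hca : c = a
          · subst hca; exact hQb
          · by_cases hcb : c = b
            · subst hcb; exact hQa
            · have hc' := hQ2 c hc1 hc2
              rw [ea', eb', eo hca hcb] at hc'
              exact hc'
      · -- b outside [a', b']
        have hout : b < a' ∨ b' < b := by
          rcases lt_trichotomy b a' with h | h | h
          · exact Or.inl h
          · exact absurd h hba'
          · rcases lt_trichotomy b b' with h2 | h2 | h2
            · exact absurd ⟨h, h2⟩ hbi
            · exact absurd h2 hbb'
            · exact Or.inr h2
        rcases lt_trichotomy a a' with hlt | heq | hgt
        · -- a < a', b outside : nothing changes on [a', b']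
          have hne : ∀ x : Fin n, a' ≤ x → x ≤ b' → (u * Equiv.swap a b) x = u x := by
            intro x hx1 hx2
            refine eo (lt_of_lt_of_le hlt hx1).ne' ?_
            rcases hout with h | h
            · exact (lt_of_lt_of_le h hx1).ne'
            · exact (lt_of_le_of_lt hx2 h).ne
          refine useOld k' a' b' hkk' ha'k' hk'b'
            (fun he => ⟨le_of_lt (Fin.lt_def.mp hlt), (hside' he).2.1⟩) ?_
          rw [hne a' le_rfl ha'b'.le, hne b' ha'b'.le le_rfl] at hQ1
          refine ⟨hQ1, fun c hc1 hc2 => ?_⟩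
          have hc' := hQ2 c hc1 hc2
          rw [hne a' le_rfl ha'b'.le, hne b' ha'b'.le le_rfl,
            hne c hc1.le hc2.le] at hc'
          exact hc'
        · -- a = a', b outside : then b > b'
          have hb'b : b' < b := by
            refine hout.resolve_left (fun h => absurd (lt_trans h (heq ▸ hab)) ?_)
            exact lt_irrefl b
          refine useOld k' a' b' hkk' ha'k' hk'b'
            (fun he => ⟨le_of_eq (congrArg Fin.val heq), (hside' he).2.1⟩) ?_
          have ea' : (u * Equiv.swap a b) a' = u b := by rw [← heq, ea]
          have eb' : (u * Equiv.swap a b) b' = u b' :=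
            eo (heq ▸ ha'b').ne' hb'b.ne
          rw [ea', eb'] at hQ1
          -- hQ1 : u b' < u b
          have hub' : ¬ u a < u b' := fun hx =>
            hcov.2 b' (heq ▸ ha'b') hb'b ⟨hx, hQ1⟩
          have h1 : u b' < u a := lt_of_le_of_ne (not_lt.mp hub')
            (fun he2 => (heq ▸ ha'b').ne' (u.injective he2))
          refine ⟨by rw [← heq]; exact h1, fun c hc1 hc2 => ?_⟩
          have hac : a < c := by rw [heq]; exact hc1
          have hcb : c < b := lt_trans hc2 hb'b
          have hc' := hQ2 c hc1 hc2
          rw [ea', eb', eo hac.ne' hcb.ne] at hc'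
          -- hc' : u b' < u c ∧ u c < u b
          have h8 : ¬ u a < u c := fun hx => hcov.2 c hac hcb ⟨hx, hc'.2⟩
          have h9 : u c < u a := lt_of_le_of_ne (not_lt.mp h8)
            (fun he => hac.ne (u.injective he).symm)
          exact ⟨hc'.1, by rw [← heq]; exact h9⟩
        · -- a' < a, b outside : then b > b'
          have hb'b : b' < b :=
            hout.resolve_left (fun h =>
              absurd (lt_trans (lt_trans h hgt) hab) (lt_irrefl b))
          have hknek : k' ≠ k := fun he =>
            absurd (hside' he).1 (not_le.mpr (Fin.lt_def.mp hgt))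
          have hab'2 : a < b' := Fin.lt_def.mpr (lt_of_le_of_lt hak
            (lt_of_le_of_lt hkk' hk'b'))
          have ea' : (u * Equiv.swap a b) a' = u a' :=
            eo hgt.ne (lt_trans hgt hab).ne
          have eb' : (u * Equiv.swap a b) b' = u b' :=
            eo hab'2.ne' hb'b.ne
          have hQa := hQ2 a hgt hab'2
          rw [ea', eb', ea] at hQa
          -- hQa : u b' < u b ∧ u b < u a'
          by_cases hc : u b' < u a
          · refine useOld k' a' b' hkk' ha'k' hk'b' (fun he => absurd he hknek) ?_
            rw [ea', eb'] at hQ1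
            refine ⟨hQ1, fun c hc1 hc2 => ?_⟩
            by_cases hca : c = a
            · subst hca; exact ⟨hc, lt_trans hcov.1 hQa.2⟩
            · have hc' := hQ2 c hc1 hc2
              rw [ea', eb', eo hca (lt_of_lt_of_le hc2 hb'b.le).ne] at hc'
              exact hc'
          · have h7 : u a < u b' := lt_of_le_of_ne (not_lt.mp hc)
              (fun he => hab'2.ne (u.injective he))
            exact absurd ⟨h7, hQa.1⟩ (hcov.2 b' hab'2 hb'b)

lemma isPath_append {u v : Equiv.Perm (Fin n)} {L1 L2 : List (Fin n × Fin n)}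
    (h : isPath n u (L1 ++ L2) v) : ∃ w, isPath n u L1 w ∧ isPath n w L2 v := by
  induction L1 generalizing u with
  | nil => exact ⟨u, rfl, h⟩
  | cons p ps ih =>
    obtain ⟨w, h1, h2⟩ := ih h.2
    exact ⟨w, ⟨h.1, h1⟩, h2⟩

lemma pathWeight_append (u : Equiv.Perm (Fin n)) (L1 L2 : List (Fin n × Fin n)) :
    ∀ {w : Equiv.Perm (Fin n)}, isPath n u L1 w →
    pathWeight n u (L1 ++ L2) = pathWeight n u L1 + pathWeight n w L2 := by
  induction L1 generalizing u with
  | nil => intro w h; cases h; simp [pathWeight]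
  | cons p ps ih =>
    intro w h
    have := ih (step n u p) h.2
    simp only [List.cons_append, pathWeight, List.append_eq] at this ⊢
    rw [this, add_assoc]

lemma allUp_append {u : Equiv.Perm (Fin n)} {L1 L2 : List (Fin n × Fin n)}
    {w : Equiv.Perm (Fin n)} (h : isPath n u L1 w) (h1 : allUp n u L1) (h2 : allUp n w L2) :
    allUp n u (L1 ++ L2) := by
  induction L1 generalizing u with
  | nil => cases h; exact h2
  | cons p ps ih => exact ⟨h1.1, ih h.2 h1.2⟩

/-- Main single-stage induction. -/
lemma stage (k : ℕ) : ∀ (L : List (Fin n × Fin n)) (u v : Equiv.Perm (Fin n))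
    (amin : ℕ) (B : Finset (Fin n)),
    isPath n u L v →
    List.Chain' (· ≤ ·) (L.map Prod.fst) →
    (∀ q ∈ L.head?, amin ≤ (q.1 : ℕ)) →
    (∀ p ∈ L, (p.1 : ℕ) ≤ k ∧ k < (p.2 : ℕ)) →
    (L.map Prod.snd).Nodup →
    (∀ p ∈ L, p.2 ∉ B) →
    GoodState n u k amin B →
    pathWeight n u L = 0 ∧ allUp n u L ∧ ∃ amin' B', GoodState n v k amin' B' := by
  intro L
  induction L with
  | nil =>
    intro u v amin B hpath _ _ _ _ _ hgood
    cases hpath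
    exact ⟨rfl, trivial, amin, B, hgood⟩
  | cons p ps ih =>
    intro u v amin B hpath hchain hhead hk hnd hB hgood
    obtain ⟨⟨hab, hor⟩, hrest⟩ := hpath
    have hk1 := (hk p (List.mem_cons_self)).1
    have hk2 := (hk p (List.mem_cons_self)).2
    have hamin : amin ≤ (p.1 : ℕ) := hhead p rfl
    have hpB : p.2 ∉ B := hB p (List.mem_cons_self)
    have hnq : ¬ (len n (step n u p) + 2 * ((p.2 : ℕ) - (p.1 : ℕ)) = len n u + 1) := fun hq =>
      hgood k p.1 p.2 le_rfl hk1 hk2 (fun _ => ⟨hamin, hpB⟩)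
        (qshape_of_quantum u p.1 p.2 hab hq)
    have hup : len n (step n u p) = len n u + 1 := hor.resolve_right hnq
    have hcov : Cov n u p.1 p.2 := cov_of_up u p.1 p.2 hab hup
    have hgood' : GoodState n (step n u p) k (p.1 : ℕ) (insert p.2 B) :=
      step_good hk1 hk2 hamin hpB hcov hgood
    have hchain2 := List.isChain_cons.mp (by simpa using hchain :
      List.Chain' (· ≤ ·) (p.1 :: ps.map Prod.fst))
    have hhead' : ∀ q ∈ ps.head?, (p.1 : ℕ) ≤ (q.1 : ℕ) := by
      intro q hq
      have hm : q.1 ∈ (ps.map Prod.fst).head? := by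
        rw [List.head?_map]
        exact Option.mem_map_of_mem _ hq
      exact hchain2.1 q.1 hm
    have hnd2 : p.2 ∉ ps.map Prod.snd ∧ (ps.map Prod.snd).Nodup := by
      simpa using hnd
    have hB' : ∀ q ∈ ps, q.2 ∉ insert p.2 B := by
      intro q hq
      rw [Finset.mem_insert]
      rintro (he | he)
      · exact hnd2.1 (he ▸ List.mem_map_of_mem (f := Prod.snd) hq)
      · exact hB q (List.mem_cons_of_mem _ hq) he
    obtain ⟨w0, up0, amin', B', hg⟩ := ih (step n u p) v (p.1 : ℕ) (insert p.2 B) hrest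
      hchain2.2 hhead' (fun q hq => hk q (List.mem_cons_of_mem _ hq)) hnd2.2 hB' hgood'
    refine ⟨?_, ⟨hup, up0⟩, amin', B', hg⟩
    show edgeWeight n u p + pathWeight n (step n u p) ps = 0
    rw [w0, add_zero, edgeWeight, if_pos hup]

lemma chain'_finRange (m : ℕ) :
    List.Chain' (fun x y : Fin m => (x : ℕ) < (y : ℕ)) (List.finRange m) :=
  ((List.pairwise_lt_finRange m).imp (fun h => Fin.lt_def.mp h)).isChain

lemma stagesAux (Ls : Fin (n - 1) → List (Fin n × Fin n))
    (hadm : ∀ k : Fin (n - 1), yAdm n k (Ls k)) :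
    ∀ (l : List (Fin (n - 1))) (u v : Equiv.Perm (Fin n)),
    List.Chain' (fun x y : Fin (n-1) => (x : ℕ) < (y : ℕ)) l →
    (∀ k ∈ l.head?, GoodState n u (k : ℕ) 0 ∅) →
    isPath n u (l.map Ls).flatten v →
    pathWeight n u (l.map Ls).flatten = 0 ∧ allUp n u (l.map Ls).flatten := by
  intro l
  induction l with
  | nil =>
    intro u v _ _ hpath
    exact ⟨rfl, trivial⟩
  | cons k rest ih =>
    intro u v hchain hhead hpath
    simp only [List.map_cons, List.flatten_cons] at hpath ⊢
    obtain ⟨w, h1, h2⟩ := isPath_append hpath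
    have hgood : GoodState n u (k : ℕ) 0 ∅ := hhead k rfl
    obtain ⟨hA, hK, hN⟩ := hadm k
    obtain ⟨hw0, hup, amin', B', hgood'⟩ :=
      stage (k : ℕ) (Ls k) u w 0 ∅ h1 hA (fun q _ => Nat.zero_le _) hK hN
        (fun p _ => Finset.notMem_empty _) hgood
    obtain ⟨hcr, hc⟩ := List.isChain_cons.mp hchain
    have hhead2 : ∀ k' ∈ rest.head?, GoodState n w (k' : ℕ) 0 ∅ :=
      fun k' hk' => good_weaken hgood' (hcr k' hk')
    obtain ⟨w2, up2⟩ := ih w v hc hhead2 h2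
    exact ⟨by rw [pathWeight_append u _ _ h1, hw0, w2, add_zero],
      allUp_append h1 hup up2⟩

end QBGproof


/-- Every `y^β`-admissible directed path in `Γ_n` starting at the identity has
weight `0` in `ℤ^{n-1}`; equivalently, every edge of such a path is
length-increasing, so the path is a saturated chain in the Bruhat order. -/
theorem admissible_path_from_identity_weight_zero (n : ℕ) (hn : 2 ≤ n)
    (v : Equiv.Perm (Fin n)) (β : Fin (n - 1) → ℕ) (L : List (Fin n × Fin n))
    (hpath : isPath n 1 L v) (hadm : yBetaAdm n β L) :
    pathWeight n 1 L = 0 ∧ allUp n 1 L := by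
  obtain ⟨Ls, hL, hprops⟩ := hadm
  have hflat : L = ((List.finRange (n-1)).map Ls).flatten := by
    rw [hL, List.ofFn_eq_map]
  subst hflat
  exact QBGproof.stagesAux Ls (fun k => (hprops k).2) (List.finRange (n-1)) 1 v
    (QBGproof.chain'_finRange _) (fun k _ => QBGproof.good_init _ _ _) hpath
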